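/- For positive integers d, r, s, the number of (s, s+r)-core partitions with d-distinct parts is finite if and only if gcd(s, r) ≤ d. -/

import Mathlib

/-- A partition represented as a nonincreasing list of positive integers. -/
def IsPartitionList (L : List ℕ) : Prop :=
  L.Pairwise (· ≥ ·) ∧ ∀ p ∈ L, 0 < p

/-- The conjugate partition's `j`-th part. -/
def conjPart (L : List ℕ) (j : ℕ) : ℕ := (L.filter (fun p => j ≤ p)).length

/-- Hook length of the cell in row `i` (0-indexed) and column `j` (1-indexed). -/
def hookLen (L : List ℕ) (i j : ℕ) : ℕ :=
  (L.getD i 0 - j) + (conjPart L j - (i + 1)) + 1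

/-- A partition is `s`-core if no cell has hook length `s`. -/
def IsCore (L : List ℕ) (s : ℕ) : Prop :=
  ∀ i < L.length, ∀ j, 1 ≤ j → j ≤ L.getD i 0 → hookLen L i j ≠ s

/-- The β-set of `L = (λ₁, …, λ_k)`: the set `{λ_i + k − i : 1 ≤ i ≤ k}`. -/
def betaSet (L : List ℕ) : Finset ℕ :=
  (Finset.range L.length).image (fun i => L.getD i 0 + L.length - (i + 1))

/-- `L` has `d`-distinct parts: consecutive parts differ by at least `d`. -/
def DDistinct (d : ℕ) (L : List ℕ) : Prop :=
  ∀ i, i + 1 < L.length → L.getD (i + 1) 0 + d ≤ L.getD i 0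

/-- A finite set of naturals is `d`-th order twin-free:
any two distinct elements differ by more than `d`. -/
def TwinFree (d : ℕ) (β : Finset ℕ) : Prop :=
  ∀ x ∈ β, ∀ y ∈ β, x ≠ y → d < max x y - min x y

lemma conj_lt_iff (L : List ℕ) (hL : L.Pairwise (· ≥ ·)) (j i : ℕ) :
    i < conjPart L j ↔ i < L.length ∧ j ≤ L.getD i 0 := by
  induction L generalizing i with
  | nil => simp [conjPart]
  | cons a L ih =>
    rw [List.pairwise_cons] at hL
    by_cases hja : j ≤ a
    · have hc : conjPart (a :: L) j = conjPart L j + 1 := by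
        simp [conjPart, List.filter_cons, hja]
      cases i with
      | zero => simp [hc, hja]
      | succ i => simp only [hc, Nat.succ_lt_succ_iff, List.length_cons, List.getD_cons_succ]
                  exact ih hL.2 i
    · have hc : conjPart (a :: L) j = 0 := by
        simp only [conjPart, List.filter_cons, decide_eq_true_eq, if_neg hja]
        rw [List.length_eq_zero_iff, List.filter_eq_nil_iff]
        intro x hx
        simp only [decide_eq_true_eq]
        exact fun h => hja (h.trans (hL.1 x hx))
      rw [hc]
      simp only [Nat.not_lt_zero, false_iff, not_and, not_le]
      intro hi
      cases i with
      | zero => simpa using Nat.lt_of_not_le hja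
      | succ i =>
        simp only [List.getD_cons_succ]
        have hilen : i < L.length := by simpa using hi
        have hmem : L.getD i 0 ∈ L := by
          rw [List.getD_eq_getElem _ _ hilen]; exact List.getElem_mem _
        have := hL.1 _ hmem
        omega

lemma conj_le_length (L : List ℕ) (j : ℕ) : conjPart L j ≤ L.length :=
  List.length_filter_le _ _

lemma conj_anti (L : List ℕ) {j j' : ℕ} (h : j ≤ j') : conjPart L j' ≤ conjPart L j := by
  unfold conjPart
  rw [← List.countP_eq_length_filter, ← List.countP_eq_length_filter]
  apply List.countP_mono_left
  intro x _ hx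
  simp only [decide_eq_true_eq] at *
  omega

lemma mem_betaSet (L : List ℕ) (x : ℕ) :
    x ∈ betaSet L ↔ ∃ i, i < L.length ∧ L.getD i 0 + L.length - (i + 1) = x := by
  simp [betaSet, Finset.mem_image, Finset.mem_range]

lemma sorted_getD (L : List ℕ) (hL : L.Pairwise (· ≥ ·)) {i' i : ℕ} (h : i' ≤ i)
    (hi : i < L.length) : L.getD i 0 ≤ L.getD i' 0 := by
  rcases eq_or_lt_of_le h with rfl | h
  · exact le_refl _
  · have hi' : i' < L.length := lt_trans h hi
    rw [List.getD_eq_getElem _ _ hi, List.getD_eq_getElem _ _ hi']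
    exact List.pairwise_iff_get.mp hL ⟨i', hi'⟩ ⟨i, hi⟩ h

lemma getD_pos (L : List ℕ) (hpos : ∀ p ∈ L, 0 < p) {i : ℕ} (hi : i < L.length) :
    0 < L.getD i 0 := by
  apply hpos
  rw [List.getD_eq_getElem _ _ hi]; exact List.getElem_mem _

/-- the counting function `F j = j + (k - conj j)`. -/
def Ff (L : List ℕ) (j : ℕ) : ℕ := j + (L.length - conjPart L j)

lemma Ff_mono (L : List ℕ) {j j' : ℕ} (h : j ≤ j') : Ff L j + (j' - j) ≤ Ff L j' := by
  have h1 := conj_anti L h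
  have h2 := conj_le_length L j
  have h3 := conj_le_length L j'
  unfold Ff
  omega

lemma Ff_skip (L : List ℕ) (hL : L.Pairwise (· ≥ ·)) {j c : ℕ}
    (h1 : Ff L j ≤ c) (h2 : c + 1 < Ff L (j + 1)) : c ∈ betaSet L := by
  have ha1 := conj_le_length L j
  have ha2 := conj_le_length L (j+1)
  have ha3 := conj_anti L (Nat.le_succ j)
  set k := L.length
  set i' := conjPart L j - (c + 1 - Ff L j) with hi'
  have hlt : i' < conjPart L j := by unfold Ff at *; omega
  have hge : conjPart L (j+1) ≤ i' := by unfold Ff at *; omega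
  have h4 := (conj_lt_iff L hL j i').mp hlt
  have h5 : ¬ (i' < k ∧ j + 1 ≤ L.getD i' 0) := by
    rw [← conj_lt_iff L hL]; omega
  have h6 : L.getD i' 0 = j := by omega
  rw [mem_betaSet]
  refine ⟨i', h4.1, ?_⟩
  unfold Ff at *; omega

lemma core_closure (L : List ℕ) (hL : L.Pairwise (· ≥ ·)) (hpos : ∀ p ∈ L, 0 < p) {s : ℕ}
    (hcore : IsCore L s) : ∀ x ∈ betaSet L, s ≤ x → x - s ∈ betaSet L := by
  intro x hx hsx
  rw [mem_betaSet] at hx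
  obtain ⟨i, hik, hbi⟩ := hx
  have hlampos : 0 < L.getD i 0 := getD_pos L hpos hik
  by_contra hc
  have hex : ∃ m, (x - s) + 1 ≤ Ff L (m + 1) := by
    refine ⟨x - s, ?_⟩
    have := conj_le_length L (x - s + 1)
    unfold Ff; omega
  obtain ⟨n, hn1, hn2⟩ : ∃ n, (x - s) + 1 ≤ Ff L (n + 1) ∧
      ∀ m' , m' < n → Ff L (m' + 1) ≤ x - s :=
    ⟨Nat.find hex, Nat.find_spec hex, fun m' hm' => by
      have := Nat.find_min hex hm'; omega⟩
  have hconj1 : conjPart L 1 = L.length := by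
    unfold conjPart
    rw [List.filter_eq_self.mpr]
    intro y hy
    exact decide_eq_true (hpos y hy)
  have h2 : Ff L (n + 1) = (x - s) + 1 := by
    by_contra hne
    have h2' : (x - s) + 1 < Ff L (n + 1) := by omega
    rcases Nat.eq_zero_or_pos n with rfl | hm0
    · have hFf1 : Ff L (0 + 1) = 1 := by
        show 1 + (L.length - conjPart L 1) = 1
        rw [hconj1]; omega
      omega
    · have hmin : Ff L ((n - 1) + 1) ≤ x - s := hn2 (n-1) (by omega)
      have hmin' : Ff L n ≤ x - s := by
        have he : n - 1 + 1 = n := by omega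
        rwa [he] at hmin
      exact hc (Ff_skip L hL hmin' h2')
  have h3 : n + 1 ≤ L.getD i 0 := by
    by_contra hgt
    have hle : L.getD i 0 + 1 ≤ n + 1 := by omega
    have hmono := Ff_mono L hle
    have hconji : conjPart L (L.getD i 0 + 1) ≤ i := by
      by_contra hcc
      have := (conj_lt_iff L hL (L.getD i 0 + 1) i).mp (by omega)
      omega
    have e1 : Ff L (L.getD i 0 + 1)
        = L.getD i 0 + 1 + (L.length - conjPart L (L.getD i 0 + 1)) := rfl
    have e2 := conj_le_length L (L.getD i 0 + 1)
    omega
  have h4 : i + 1 ≤ conjPart L (n + 1) := by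
    rw [Nat.succ_le_iff, conj_lt_iff L hL]
    exact ⟨hik, h3⟩
  have h5 := conj_le_length L (n + 1)
  have hhook : hookLen L i (n + 1) = s := by
    unfold hookLen
    unfold Ff at h2
    omega
  exact hcore i hik (n + 1) (by omega) h3 hhook

lemma beta_gap (L : List ℕ) (hL : L.Pairwise (· ≥ ·)) (hpos : ∀ p ∈ L, 0 < p) {d : ℕ}
    (hdd : DDistinct d L) : ∀ x ∈ betaSet L, ∀ y ∈ betaSet L, x < y → x + d < y := by
  intro x hx y hy hxy
  rw [mem_betaSet] at hx hy
  obtain ⟨i, hik, hbi⟩ := hx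
  obtain ⟨i', hik', hbi'⟩ := hy
  set k := L.length
  -- beta is strictly decreasing in index, so i' < i
  have hmono : ∀ a b : ℕ, a ≤ b → b < k →
      L.getD b 0 + k - (b+1) ≤ L.getD a 0 + k - (a+1) := by
    intro a b hab hbk
    have h1 := sorted_getD L hL hab hbk
    have h2 := getD_pos L hpos hbk
    omega
  have hii : i' < i := by
    by_contra hcon
    have : i ≤ i' := by omega
    have := hmono i i' this hik'
    omega
  have hidx : i' + 1 ≤ i := hii
  have hd1 := hdd i' (by omega)
  have h2 := hmono (i'+1) i hidx hik
  have h3 := getD_pos L hpos hik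
  omega

lemma semigroup_closure (L : List ℕ) {s t : ℕ}
    (hcs : ∀ x ∈ betaSet L, s ≤ x → x - s ∈ betaSet L)
    (hct : ∀ x ∈ betaSet L, t ≤ x → x - t ∈ betaSet L) :
    ∀ a c x, x ∈ betaSet L → a * s + c * t ≤ x → x - (a * s + c * t) ∈ betaSet L := by
  intro a
  induction a with
  | zero =>
    intro c
    induction c with
    | zero => intro x hx _; simpa using hx
    | succ c ihc =>
      intro x hx hle
      have hct' : (c+1) * t = c * t + t := by ring
      have h1 : c * t ≤ x := by omega
      have h2 := ihc x hx (by omega)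
      have h3 : t ≤ x - (0 * s + c * t) := by omega
      have := hct _ h2 h3
      have heq : x - (0 * s + c * t) - t = x - (0 * s + (c+1) * t) := by omega
      rwa [heq] at this
  | succ a iha =>
    intro c x hx hle
    have hstep : (a+1) * s + c * t = (a * s + c * t) + s := by ring
    have h1 : a * s + c * t ≤ x := by omega
    have h2 := iha c x hx h1
    have h3 : s ≤ x - (a * s + c * t) := by omega
    have := hcs _ h2 h3
    have heq : x - (a * s + c * t) - s = x - ((a+1) * s + c * t) := by omega
    rwa [heq] at this

lemma frobenius_rep {s r : ℕ} (hs : 0 < s) (hr : 0 < r) :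
    ∀ m, Nat.gcd s r ∣ m → s * (s + r) ≤ m → ∃ a c, m = a * s + c * (s + r) := by
  intro m hdvd hle
  set g := Nat.gcd s r with hg
  have hgpos : 0 < g := Nat.gcd_pos_of_pos_left r hs
  have hgs : g ∣ s := Nat.gcd_dvd_left s r
  have hgr : g ∣ r := Nat.gcd_dvd_right s r
  have hgt : g ∣ s + r := Dvd.dvd.add hgs hgr
  set s' := s / g with hs'
  set t' := (s + r) / g with ht'
  have hss : s' * g = s := Nat.div_mul_cancel hgs
  have htt : t' * g = s + r := Nat.div_mul_cancel hgt
  have hs'pos : 0 < s' := Nat.div_pos (Nat.le_of_dvd hs hgs) hgpos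
  rcases eq_or_lt_of_le (Nat.one_le_iff_ne_zero.mpr (by omega) : 1 ≤ s') with h1 | h1
  · -- s = g
    have hseq : s = g := by rw [← hss, ← h1, one_mul]
    obtain ⟨w, hw⟩ := hdvd
    exact ⟨w, 0, by rw [hw, hseq]; ring⟩
  · -- 1 < s'
    have hrg : g ∣ r := hgr
    have hr' : 0 < r / g := Nat.div_pos (Nat.le_of_dvd hr hgr) hgpos
    have ht'eq : t' = s' + r / g := by
      have hmul : (s' + r / g) * g = t' * g := by
        rw [add_mul, hss, Nat.div_mul_cancel hgr, htt]
      exact (Nat.eq_of_mul_eq_mul_right hgpos hmul).symm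
    have ht1 : 1 < t' := by omega
    have cop : Nat.Coprime s' t' := by
      have : Nat.gcd s (s + r) = g := by
        rw [hg]; rw [Nat.add_comm s r]; exact Nat.gcd_add_self_right s r
      rw [hs', ht', ← this]
      exact Nat.coprime_div_gcd_div_gcd (by omega)
    have hfr := frobeniusNumber_pair cop h1 ht1
    set k := m / g with hk
    have hkg : k * g = m := Nat.div_mul_cancel hdvd
    have hklarge : s' * t' ≤ k := by
      have hst : s' * t' * g ≤ m := by
        have e1 : s' * t' * g = s' * (s + r) := by rw [← htt]; ring
        have e2 : s' * (s + r) ≤ (s' * g) * (s + r) :=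
          Nat.mul_le_mul_right _ (Nat.le_mul_of_pos_right _ hgpos)
        rw [hss] at e2
        omega
      exact (Nat.le_div_iff_mul_le hgpos).mpr hst
    have hnot : ¬ (k ≤ s' * t' - s' - t') := by
      have : 0 < s' * t' := by positivity
      omega
    have hmem : k ∈ AddSubmonoid.closure ({s', t'} : Set ℕ) := by
      by_contra hcon
      exact hnot (hfr.2 hcon)
    rw [AddSubmonoid.mem_closure_pair] at hmem
    obtain ⟨a, c, hac⟩ := hmem
    refine ⟨a, c, ?_⟩
    simp only [smul_eq_mul] at hac
    calc m = k * g := hkg.symm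
    _ = (a * s' + c * t') * g := by rw [hac]
    _ = a * (s' * g) + c * (t' * g) := by ring
    _ = a * s + c * (s + r) := by rw [hss, htt]


lemma bounded_lists_finite (C : ℕ) :
    {l : List ℕ | l.length ≤ C ∧ ∀ x ∈ l, x ≤ C}.Finite := by
  have hfin : {l : List (Fin (C+1)) | l.length ≤ C}.Finite := List.finite_length_le _ C
  apply Set.Finite.subset (hfin.image (List.map (Fin.val)))
  intro l hl
  obtain ⟨hlen, hbd⟩ := hl
  refine ⟨l.attach.map (fun x => (⟨x.1, by have := hbd x.1 x.2; omega⟩ : Fin (C+1))), ?_, ?_⟩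
  · simp [hlen]
  · rw [List.map_map]
    simp

/-- The staircase family used when `gcd > d`. -/
def stairs (g n : ℕ) : List ℕ := (List.range (n+1)).map (fun i => (n+1-i)*(g-1))

lemma stairs_length (g n : ℕ) : (stairs g n).length = n + 1 := by
  simp [stairs]

lemma stairs_getD (g n : ℕ) {i : ℕ} (hi : i < n + 1) :
    (stairs g n).getD i 0 = (n+1-i)*(g-1) := by
  rw [List.getD_eq_getElem _ _ (by simpa [stairs_length] using hi)]
  simp [stairs]

lemma stairs_sorted (g n : ℕ) : (stairs g n).Pairwise (· ≥ ·) := by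
  unfold stairs
  rw [List.pairwise_map]
  apply List.Pairwise.imp ?_ (List.pairwise_lt_range (n := n+1))
  intro a b hab
  exact Nat.mul_le_mul_right _ (Nat.sub_le_sub_left (le_of_lt hab) _)

lemma stairs_pos (g n : ℕ) (hg : 2 ≤ g) : ∀ p ∈ stairs g n, 0 < p := by
  intro p hp
  unfold stairs at hp
  rw [List.mem_map] at hp
  obtain ⟨i, hi, rfl⟩ := hp
  rw [List.mem_range] at hi
  have h1 : 0 < n + 1 - i := by omega
  have h2 : 0 < g - 1 := by omega
  positivity

lemma stairs_ddistinct (g n d : ℕ) (hdg : d < g) : DDistinct d (stairs g n) := by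
  intro i hi
  rw [stairs_length] at hi
  rw [stairs_getD g n (by omega), stairs_getD g n (by omega)]
  have he : (n+1-i) = (n-i) + 1 := by omega
  rw [he, add_mul, one_mul]
  have : n + 1 - (i+1) = n - i := by omega
  rw [this]
  omega

lemma conj_eq_of (L : List ℕ) (hL : L.Pairwise (· ≥ ·)) (t j : ℕ) (ht : t ≤ L.length)
    (h1 : ∀ i < t, j ≤ L.getD i 0) (h2 : t = L.length ∨ L.getD t 0 < j) :
    conjPart L j = t := by
  have hub : conjPart L j ≤ t := by
    by_contra hcon
    have := (conj_lt_iff L hL j t).mp (by omega)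
    omega
  have hlb : t ≤ conjPart L j := by
    rcases Nat.eq_zero_or_pos t with rfl | htpos
    · omega
    · have : t - 1 < conjPart L j := by
        rw [conj_lt_iff L hL]
        exact ⟨by omega, h1 (t-1) (by omega)⟩
      omega
  omega

lemma stairs_core (g n s : ℕ) (hg : 2 ≤ g) (hgs : g ∣ s) (hs : 0 < s) :
    IsCore (stairs g n) s := by
  obtain ⟨g', rfl⟩ : ∃ g', g = g' + 1 := ⟨g - 1, by omega⟩
  intro i hik j hj1 hj2 hhook
  rw [stairs_length] at hik
  rw [stairs_getD _ n hik] at hj2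
  simp only [Nat.add_sub_cancel] at hj2
  have hg' : 1 ≤ g' := by omega
  obtain ⟨q, rem, hmod, hremlt, hqb⟩ :
      ∃ q rem, g' * q + rem = j - 1 ∧ rem < g' ∧ q < n + 1 - i := by
    refine ⟨(j-1)/g', (j-1) % g', Nat.div_add_mod _ _, Nat.mod_lt _ (by omega), ?_⟩
    apply Nat.div_lt_of_lt_mul
    calc j - 1 < j := by omega
    _ ≤ (n+1-i) * g' := hj2
    _ = g' * (n+1-i) := by ring
  -- compute conjPart
  have hconj : conjPart (stairs (g'+1) n) j = n + 1 - q := by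
    have ha : n + 1 - q ≤ (stairs (g'+1) n).length := by rw [stairs_length]; omega
    have hb : ∀ i' < n + 1 - q, j ≤ (stairs (g'+1) n).getD i' 0 := by
      intro i' hi'
      have hi'n : i' < n + 1 := by omega
      rw [stairs_getD _ n hi'n]
      simp only [Nat.add_sub_cancel]
      have hge : q + 1 ≤ n + 1 - i' := by omega
      have := Nat.mul_le_mul_right g' hge
      have he : (q+1) * g' = g' * q + g' := by ring
      omega
    have hc : n + 1 - q = (stairs (g'+1) n).length ∨
        (stairs (g'+1) n).getD (n + 1 - q) 0 < j := by
      rcases Nat.eq_zero_or_pos q with hq0 | hqpos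
      · left; rw [stairs_length]; omega
      · right
        rw [stairs_getD _ n (by omega)]
        simp only [Nat.add_sub_cancel]
        have he : n + 1 - (n + 1 - q) = q := by omega
        rw [he]
        have he2 : q * g' = g' * q := by ring
        omega
    exact conj_eq_of _ (stairs_sorted _ n) _ _ ha hb hc
  -- now derive contradiction
  unfold hookLen at hhook
  rw [stairs_getD _ n hik, hconj] at hhook
  simp only [Nat.add_sub_cancel] at hhook
  obtain ⟨w, hw⟩ := hgs
  -- glue products
  have e1 : (n+1-i) * g' + (n+1-i) = (n+1-i) * (g'+1) := by ring
  have e2 : g' * q + q = (g'+1) * q := by ring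
  have e3 : (w + q) * (g'+1) = (g'+1) * w + (g'+1) * q := by ring
  have e4 : (w + q + 1) * (g'+1) = (g'+1) * w + (g'+1) * q + (g'+1) := by ring
  have hE : (n+1-i) * (g'+1) = (g'+1) * w + (g'+1) * q + rem + 1 := by omega
  have hlt : (w + q) * (g'+1) < (n+1-i) * (g'+1) := by omega
  have hA : w + q < n + 1 - i := lt_of_mul_lt_mul_right hlt (Nat.zero_le _)
  have : (w + q + 1) * (g'+1) ≤ (n+1-i) * (g'+1) := Nat.mul_le_mul_right _ (by omega)
  omega

theorem finite_iff_gcd_le (d r s : ℕ) (hd : 0 < d) (hr : 0 < r) (hs : 0 < s) :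
    {L : List ℕ | IsPartitionList L ∧ IsCore L s ∧ IsCore L (s + r) ∧
      DDistinct d L}.Finite ↔ Nat.gcd s r ≤ d := by
  constructor
  · intro hfin
    by_contra hgd
    push_neg at hgd
    set g := Nat.gcd s r with hg
    have hg2 : 2 ≤ g := by omega
    have hgs : g ∣ s := Nat.gcd_dvd_left s r
    have hgt : g ∣ s + r := Dvd.dvd.add hgs (Nat.gcd_dvd_right s r)
    apply hfin.not_infinite
    apply Set.infinite_of_injective_forall_mem (f := fun n => stairs g n)
    · intro a b hab
      have := congrArg List.length hab
      rw [stairs_length, stairs_length] at this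
      omega
    · intro n
      refine ⟨⟨stairs_sorted g n, stairs_pos g n hg2⟩, ?_, ?_, ?_⟩
      · exact stairs_core g n s hg2 hgs hs
      · exact stairs_core g n (s+r) hg2 hgt (by omega)
      · exact stairs_ddistinct g n d (by omega)
  · intro hgd
    set g := Nat.gcd s r with hg
    have hgpos : 0 < g := Nat.gcd_pos_of_pos_left r hs
    set M := s * (s + r) with hM
    apply Set.Finite.subset (bounded_lists_finite (M + g + 1))
    rintro L ⟨⟨hsort, hpos⟩, hcore1, hcore2, hdd⟩
    rcases Nat.eq_zero_or_pos L.length with hk0 | hkpos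
    · rw [List.length_eq_zero_iff] at hk0
      subst hk0
      exact ⟨by simp, by simp⟩
    have hcs := core_closure L hsort hpos hcore1
    have hct := core_closure L hsort hpos hcore2
    have semi := semigroup_closure L hcs hct
    have hb0mem : L.getD 0 0 + L.length - (0 + 1) ∈ betaSet L :=
      (mem_betaSet L _).mpr ⟨0, hkpos, rfl⟩
    have hl0pos : 0 < L.getD 0 0 := getD_pos L hpos hkpos
    have hb0 : L.getD 0 0 + L.length - 1 ≤ M + g := by
      by_contra hcon
      have hgM : g ∣ M := (Nat.gcd_dvd_left s r).mul_right (s+r)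
      obtain ⟨a1, c1, hrep1⟩ := frobenius_rep hs hr M hgM (le_refl M)
      obtain ⟨a2, c2, hrep2⟩ := frobenius_rep hs hr (M + g) (hgM.add (dvd_refl g)) (by omega)
      have hx1 : L.getD 0 0 + L.length - (0+1) - M ∈ betaSet L := by
        rw [hrep1]
        exact semi a1 c1 _ hb0mem (by rw [← hrep1]; omega)
      have hx2 : L.getD 0 0 + L.length - (0+1) - (M + g) ∈ betaSet L := by
        rw [hrep2]
        exact semi a2 c2 _ hb0mem (by rw [← hrep2]; omega)
      have hgap := beta_gap L hsort hpos hdd _ hx2 _ hx1 (by omega)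
      omega
    refine ⟨by omega, ?_⟩
    intro x hx
    rw [List.mem_iff_getElem] at hx
    obtain ⟨i, hi, rfl⟩ := hx
    have h1 : L.getD i 0 ≤ L.getD 0 0 := sorted_getD L hsort (Nat.zero_le i) hi
    rw [List.getD_eq_getElem _ _ hi] at h1
    omega
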